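/- The diverge probability is independent of the stack symbol: Let Δ be a pVPA. For every q ∈ Q and all Z, Z' ∈ Γ∖{⊥}, it holds that Σ_{t∈Q} [qZ↓t] = Σ_{t∈Q} [qZ'↓t]; consequently the diverge probability ⟨q↑⟩ = 1 − Σ_{t∈Q}[qZ↓t] is well-defined independently of the chosen stack symbol Z. -/

import Mathlib

open MeasureTheory Filter
open scoped ENNReal

inductive SymType : Type
  | call
  | int
  | ret
deriving DecidableEq

/-- A probabilistic visibly pushdown automaton (pVPA), without the labelling:
states `Q` partitioned by `stType` into call/internal/return states, initial state `q0`,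
stack alphabet `Γ` with bottom symbol `bot`, and transition probability functions. -/
structure PVPACore (Q Γ : Type) where
  q0 : Q
  bot : Γ
  stType : Q → SymType
  Pcall : Q → PMF (Q × {Z : Γ // Z ≠ bot})
  Pint : Q → PMF Q
  Pret : Q → Γ → PMF Q

/-- Configurations form a countable set; we endow them with the discrete σ-algebra,
so that the product σ-algebra on runs is the cylinder σ-algebra. -/
instance {Q Γ : Type} (b : Γ) : MeasurableSpace (Q × List {Z : Γ // Z ≠ b}) := ⊤

instance {Q : Type} : MeasurableSpace (Q ⊕ Q) := ⊤

namespace PVPACore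

variable {Q Γ : Type}

/-- Configurations: a state together with the stack contents strictly above `⊥`. -/
abbrev Config (Δ : PVPACore Q Γ) : Type := Q × List {Z : Γ // Z ≠ Δ.bot}

/-- Runs: infinite sequences of configurations. -/
abbrev Run (Δ : PVPACore Q Γ) : Type := ℕ → Δ.Config

/-- Stack height of a configuration (`⊥` does not count). -/
def sh {Δ : PVPACore Q Γ} (c : Δ.Config) : ℕ := c.2.length

/-- Transition probabilities of the configuration Markov chain generated by `Δ`. -/
noncomputable def cfgP [DecidableEq Q] [DecidableEq Γ] (Δ : PVPACore Q Γ)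
    (c c' : Δ.Config) : ℝ≥0∞ :=
  match Δ.stType c.1 with
  | SymType.call =>
      match c'.2 with
      | [] => 0
      | Z :: γ => if γ = c.2 then Δ.Pcall c.1 (c'.1, Z) else 0
  | SymType.int => if c'.2 = c.2 then Δ.Pint c.1 c'.1 else 0
  | SymType.ret =>
      match c.2 with
      | [] => if c'.2 = [] then Δ.Pret c.1 Δ.bot c'.1 else 0
      | Z :: γ => if c'.2 = γ then Δ.Pret c.1 Z.1 c'.1 else 0

/-- `μ` is the run measure of `Δ`: the probability measure on runs (with the cylinder
σ-algebra) under which the run starts at `q0⊥` and evolves by the transition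
probabilities `cfgP`; it is characterised by its values on cylinder sets. -/
structure IsRunMeasure [DecidableEq Q] [DecidableEq Γ] (Δ : PVPACore Q Γ)
    (μ : Measure Δ.Run) : Prop where
  prob : IsProbabilityMeasure μ
  cyl : ∀ (w : ℕ → Δ.Config) (n : ℕ),
      μ {ρ : Δ.Run | ∀ i ≤ n, ρ i = w i} =
        (if w 0 = ((Δ.q0, []) : Δ.Config) then 1 else 0) *
          ∏ i ∈ Finset.range n, Δ.cfgP (w i) (w (i + 1))

end PVPACore

/-- `i` is a step position of the height sequence `h`: no later position has
strictly smaller height. -/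
def IsStepSeq (h : ℕ → ℕ) (i : ℕ) : Prop := ∀ n, i ≤ n → h i ≤ h n

/-- The `n`-th step position of the height sequence `h`. -/
noncomputable def nthStep (h : ℕ → ℕ) (n : ℕ) : ℕ := Nat.nth (IsStepSeq h) n

namespace PVPACore

variable {Q Γ : Type}

/-- `i` is a step of the run `ρ`. -/
def IsStepAt (Δ : PVPACore Q Γ) (ρ : Δ.Run) (i : ℕ) : Prop :=
  IsStepSeq (fun n => sh (ρ n)) i

/-- Position of the `n`-th step of `ρ`. -/
noncomputable def stepPos (Δ : PVPACore Q Γ) (ρ : Δ.Run) (n : ℕ) : ℕ :=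
  nthStep (fun k => sh (ρ k)) n

/-- The (extended) state at the `n`-th step of a run: `Sum.inl q` if the `n`-th step
configuration is a non-bottom configuration with state `q`, and `Sum.inr q` if it is
the bottom configuration `q⊥`. -/
noncomputable def V (Δ : PVPACore Q Γ) (n : ℕ) (ρ : Δ.Run) : Q ⊕ Q :=
  match ρ (Δ.stepPos ρ n) with
  | (q, []) => Sum.inr q
  | (q, _ :: _) => Sum.inl q

/-- Weight (product of one-step transition probabilities) of a finite path. -/
noncomputable def pathWeight [DecidableEq Q] [DecidableEq Γ] (Δ : PVPACore Q Γ) :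
    List Δ.Config → ℝ≥0∞
  | [] => 1
  | [_] => 1
  | c :: c' :: w => Δ.cfgP c c' * pathWeight Δ (c' :: w)

/-- A return path from `qZ⊥` to `r⊥`: a finite path starting at `qZ⊥`, ending at `r⊥`,
all of whose strictly intermediate configurations have stack height ≥ 1. -/
def IsRetPath (Δ : PVPACore Q Γ) (q : Q) (Z : {Z : Γ // Z ≠ Δ.bot}) (r : Q)
    (w : List Δ.Config) : Prop :=
  2 ≤ w.length ∧ w.head? = some (q, [Z]) ∧ w.getLast? = some (r, []) ∧
    ∀ i : Fin w.length, 0 < i.1 → i.1 + 1 < w.length → 1 ≤ sh (w.get i)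

/-- The return probability `[qZ↓r]`: the probability, starting from `qZ⊥`, of reaching
`r⊥` while all strictly intermediate configurations have stack height ≥ 1. -/
noncomputable def retProb [DecidableEq Q] [DecidableEq Γ] (Δ : PVPACore Q Γ)
    (q : Q) (Z : {Z : Γ // Z ≠ Δ.bot}) (r : Q) : ℝ≥0∞ :=
  ∑' w : {w : List Δ.Config // Δ.IsRetPath q Z r w}, Δ.pathWeight w.1

/-- The diverge probability `⟨q↑⟩ = 1 - Σ_t [qZ↓t]` (computed using stack symbol `Z`;
it is in fact independent of `Z`). -/
noncomputable def divergeProb [DecidableEq Q] [DecidableEq Γ] (Δ : PVPACore Q Γ)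
    (q : Q) (Z : {Z : Γ // Z ≠ Δ.bot}) : ℝ≥0∞ :=
  1 - ∑' t : Q, Δ.retProb q Z t

end PVPACore

/-- Conditional probability `μ(A | B) = μ(A ∩ B) / μ(B)`. -/
noncomputable def condP {α : Type*} [MeasurableSpace α] (μ : MeasureTheory.Measure α)
    (A B : Set α) : ℝ≥0∞ :=
  μ (A ∩ B) / μ B

/-! ### Auxiliary material for the proof -/

namespace PVPAProof

open Function

variable {α : Type*}

/-- Apply `σ` to the last element of a list. -/
def modLast (σ : α → α) : List α → List α
  | [] => []
  | [a] => [σ a]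
  | a :: b :: l => a :: modLast σ (b :: l)

@[simp] lemma modLast_nil (σ : α → α) : modLast σ [] = [] := rfl

@[simp] lemma modLast_singleton (σ : α → α) (a : α) : modLast σ [a] = [σ a] := rfl

lemma modLast_cons_of_ne_nil (σ : α → α) (a : α) {l : List α} (h : l ≠ []) :
    modLast σ (a :: l) = a :: modLast σ l := by
  cases l with
  | nil => exact absurd rfl h
  | cons b t => rfl

@[simp] lemma modLast_eq_nil_iff {σ : α → α} {l : List α} : modLast σ l = [] ↔ l = [] := by
  cases l with
  | nil => simp
  | cons a t => cases t <;> simp [modLast]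

lemma modLast_involutive {σ : α → α} (hσ : Involutive σ) : Involutive (modLast σ) := by
  intro l
  induction l with
  | nil => rfl
  | cons a t ih =>
    cases t with
    | nil => simp [hσ a]
    | cons b t =>
      rw [modLast_cons_of_ne_nil σ a (by simp),
        modLast_cons_of_ne_nil σ a (by simp), ih]

lemma modLast_injective {σ : α → α} (hσ : Involutive σ) : Injective (modLast σ) :=
  (modLast_involutive hσ).injective

variable {Q Γ : Type} [DecidableEq Q] [DecidableEq Γ] (Δ : PVPACore Q Γ)

/-- The map on configurations applying `σ` to the bottommost non-`⊥` stack symbol. -/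
def F (σ : {Z : Γ // Z ≠ Δ.bot} → {Z : Γ // Z ≠ Δ.bot}) (c : Δ.Config) : Δ.Config :=
  (c.1, modLast σ c.2)

lemma cfgP_F {σ : {Z : Γ // Z ≠ Δ.bot} → {Z : Γ // Z ≠ Δ.bot}} (hσ : Involutive σ)
    (c c' : Δ.Config) (hc : c.2 ≠ []) (hc' : c'.2 ≠ []) :
    Δ.cfgP (F Δ σ c) (F Δ σ c') = Δ.cfgP c c' := by
  obtain ⟨p, γ⟩ := c
  obtain ⟨p', γ'⟩ := c'
  simp only at hc hc'
  cases hst : Δ.stType p with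
  | call =>
    cases γ' with
    | nil => exact absurd rfl hc'
    | cons W δ =>
      cases δ with
      | nil =>
        have h1 : ¬ (([] : List {Z : Γ // Z ≠ Δ.bot}) = modLast σ γ) :=
          fun h => hc (modLast_eq_nil_iff.mp h.symm)
        have h2 : ¬ (([] : List {Z : Γ // Z ≠ Δ.bot}) = γ) := fun h => hc h.symm
        have h3 : modLast σ (W :: ([] : List {Z : Γ // Z ≠ Δ.bot})) = [σ W] := rfl
        simp only [PVPACore.cfgP, F, hst, h3]
        rw [if_neg h1, if_neg h2]
      | cons b t =>
        have h3 : modLast σ (W :: b :: t) = W :: modLast σ (b :: t) := rfl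
        simp only [PVPACore.cfgP, F, hst, h3]
        exact if_congr ⟨fun h => modLast_injective hσ h, fun h => by rw [h]⟩ rfl rfl
  | int =>
    simp only [PVPACore.cfgP, F, hst]
    exact if_congr ⟨fun h => modLast_injective hσ h, fun h => by rw [h]⟩ rfl rfl
  | ret =>
    cases γ with
    | nil => exact absurd rfl hc
    | cons W δ =>
      cases δ with
      | nil =>
        have h1 : ¬ (modLast σ γ' = ([] : List {Z : Γ // Z ≠ Δ.bot})) := by simp [hc']
        have h3 : modLast σ (W :: ([] : List {Z : Γ // Z ≠ Δ.bot})) = [σ W] := rfl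
        simp only [PVPACore.cfgP, F, hst, h3]
        rw [if_neg h1, if_neg hc']
      | cons b t =>
        have h3 : modLast σ (W :: b :: t) = W :: modLast σ (b :: t) := rfl
        simp only [PVPACore.cfgP, F, hst, h3]
        exact if_congr ⟨fun h => modLast_injective hσ h, fun h => by rw [h]⟩ rfl rfl

lemma pathWeight_cons_cons (a b : Δ.Config) (t : List Δ.Config) :
    Δ.pathWeight (a :: b :: t) = Δ.cfgP a b * Δ.pathWeight (b :: t) := rfl

lemma pathWeight_map {σ : {Z : Γ // Z ≠ Δ.bot} → {Z : Γ // Z ≠ Δ.bot}} (hσ : Involutive σ) :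
    ∀ (w : List Δ.Config), (∀ c ∈ w, c.2 ≠ []) →
      Δ.pathWeight (w.map (F Δ σ)) = Δ.pathWeight w := by
  intro w
  induction w with
  | nil => intro _; rfl
  | cons a t ih =>
    intro h
    cases t with
    | nil => rfl
    | cons b t =>
      have hih := ih (fun c hc => h c (List.mem_cons_of_mem _ hc))
      simp only [List.map_cons] at hih ⊢
      rw [pathWeight_cons_cons, pathWeight_cons_cons, hih,
        cfgP_F Δ hσ a b (h a (by simp)) (h b (by simp))]

lemma pathWeight_concat :
    ∀ (v : List Δ.Config) (hv : v ≠ []) (c : Δ.Config),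
      Δ.pathWeight (v ++ [c]) = Δ.pathWeight v * Δ.cfgP (v.getLast hv) c := by
  intro v
  induction v with
  | nil => intro hv; exact absurd rfl hv
  | cons a t ih =>
    intro _ c
    cases t with
    | nil =>
      show Δ.cfgP a c * 1 = 1 * Δ.cfgP a c
      rw [one_mul, mul_one]
    | cons b t =>
      have hbt : (b :: t : List Δ.Config) ≠ [] := by simp
      calc Δ.pathWeight ((a :: b :: t) ++ [c])
          = Δ.cfgP a b * Δ.pathWeight ((b :: t) ++ [c]) := rfl
        _ = Δ.cfgP a b * (Δ.pathWeight (b :: t) * Δ.cfgP ((b :: t).getLast hbt) c) := by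
            rw [ih hbt c]
        _ = Δ.pathWeight (a :: b :: t) * Δ.cfgP ((a :: b :: t).getLast (by simp)) c := by
            rw [pathWeight_cons_cons, List.getLast_cons hbt, mul_assoc]

lemma tsum_cfgP_pop {σ : {Z : Γ // Z ≠ Δ.bot} → {Z : Γ // Z ≠ Δ.bot}}
    (c : Δ.Config) (hc : c.2 ≠ []) :
    ∑' t : Q, Δ.cfgP (F Δ σ c) ((t, []) : Δ.Config) =
      ∑' t : Q, Δ.cfgP c ((t, []) : Δ.Config) := by
  obtain ⟨p, γ⟩ := c
  simp only at hc
  cases hst : Δ.stType p with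
  | call => simp [PVPACore.cfgP, F, hst]
  | int =>
    have h1 : ¬ (([] : List {Z : Γ // Z ≠ Δ.bot}) = modLast σ γ) :=
      fun h => hc (modLast_eq_nil_iff.mp h.symm)
    have h2 : ¬ (([] : List {Z : Γ // Z ≠ Δ.bot}) = γ) := fun h => hc h.symm
    simp only [PVPACore.cfgP, F, hst, if_neg h1, if_neg h2]
    simp [h1]
  | ret =>
    cases γ with
    | nil => exact absurd rfl hc
    | cons W δ =>
      cases δ with
      | nil =>
        have h3 : modLast σ (W :: ([] : List {Z : Γ // Z ≠ Δ.bot})) = [σ W] := rfl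
        simp only [PVPACore.cfgP, F, hst, h3, if_pos trivial, eq_self_iff_true, if_true]
        rw [(Δ.Pret p (σ W).1).tsum_coe, (Δ.Pret p W.1).tsum_coe]
      | cons b t =>
        have h3 : modLast σ (W :: b :: t) = W :: modLast σ (b :: t) := rfl
        have h4 : ¬ (([] : List {Z : Γ // Z ≠ Δ.bot}) = modLast σ (b :: t)) :=
          fun h => (List.cons_ne_nil b t) (modLast_eq_nil_iff.mp h.symm)
        have h5 : ¬ (([] : List {Z : Γ // Z ≠ Δ.bot}) = b :: t) :=
          fun h => (List.cons_ne_nil b t) h.symm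
        simp only [PVPACore.cfgP, F, hst, h3, if_neg h4, if_neg h5]

/-- An "inner path" for `qZ`: starts at `qZ⊥` and never empties the (non-`⊥`) stack. -/
def IsInner (q : Q) (Z : {Z : Γ // Z ≠ Δ.bot}) (v : List Δ.Config) : Prop :=
  v.head? = some ((q, [Z]) : Δ.Config) ∧ ∀ c ∈ v.tail, c.2 ≠ ([] : List _)

lemma IsInner.ne_nil {q : Q} {Z : {Z : Γ // Z ≠ Δ.bot}} {v : List Δ.Config}
    (h : IsInner Δ q Z v) : v ≠ [] := by
  intro hv; rw [hv] at h; exact absurd h.1 (by simp)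

lemma IsInner.all_ne_nil {q : Q} {Z : {Z : Γ // Z ≠ Δ.bot}} {v : List Δ.Config}
    (h : IsInner Δ q Z v) : ∀ c ∈ v, c.2 ≠ ([] : List _) := by
  intro c hcv
  cases v with
  | nil => exact absurd hcv List.not_mem_nil
  | cons a t =>
    rcases List.mem_cons.mp hcv with hc | hc
    · have ha : a = ((q, [Z]) : Δ.Config) := by
        have := h.1; simpa using this
      rw [hc, ha]; simp
    · exact h.2 c hc

lemma isInner_map {σ : {Z : Γ // Z ≠ Δ.bot} → {Z : Γ // Z ≠ Δ.bot}}
    {q : Q} {Z Z' : {Z : Γ // Z ≠ Δ.bot}} (hZ : σ Z = Z') {v : List Δ.Config}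
    (h : IsInner Δ q Z v) : IsInner Δ q Z' (v.map (F Δ σ)) := by
  constructor
  · rw [List.head?_map, h.1]
    simp [F, hZ]
  · intro c hc
    rw [← List.map_tail] at hc
    rcases List.mem_map.mp hc with ⟨d, hd, rfl⟩
    have := h.2 d hd
    simp [F, this]

/-- Return paths to some `t` are in bijection with pairs (inner path, final state). -/
noncomputable def retEquiv (q : Q) (Z : {Z : Γ // Z ≠ Δ.bot}) :
    (Σ t : Q, {w : List Δ.Config // Δ.IsRetPath q Z t w}) ≃
      ({v : List Δ.Config // IsInner Δ q Z v} × Q) where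
  toFun x := (⟨x.2.1.dropLast, by
    obtain ⟨t, w, hw⟩ := x
    obtain ⟨hlen, hhead, hlast, hmid⟩ := hw
    constructor
    · match w, hlen with
      | a :: b :: rest, _ =>
        rw [List.dropLast_cons₂]
        simpa using hhead
    · intro c hc
      rcases List.mem_iff_getElem.mp hc with ⟨j, hj, hcj⟩
      have hj1 : j + 1 < w.dropLast.length := by
        have := List.length_tail ▸ hj
        simp only [List.length_dropLast] at this ⊢
        omega
      have hj2 : j + 1 < w.length := by
        simp only [List.length_dropLast] at hj1; omega
      have hj3 : j + 1 + 1 < w.length := by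
        simp only [List.length_dropLast] at hj1; omega
      have hget : w.dropLast.tail[j] = w[j + 1] := by
        rw [List.getElem_tail, List.getElem_dropLast]
      have hsh := hmid ⟨j + 1, hj2⟩ (Nat.succ_pos j) hj3
      rw [← hcj, hget]
      intro hnil
      simp only [PVPACore.sh, List.get_eq_getElem] at hsh
      rw [hnil] at hsh
      simp at hsh⟩, x.1)
  invFun p := ⟨p.2, ⟨p.1.1 ++ [((p.2, []) : Δ.Config)], by
    obtain ⟨⟨v, hv⟩, t⟩ := p
    have hvne : v ≠ [] := IsInner.ne_nil Δ hv
    have hvlen : 1 ≤ v.length := List.length_pos_iff.mpr hvne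
    refine ⟨by simp; omega, ?_, by simp, ?_⟩
    · rw [List.head?_append, hv.1]; rfl
    · intro i hi0 hi1
      simp only [List.length_append, List.length_singleton] at hi1
      have hiv : i.1 < v.length := by omega
      have hget : (v ++ [((t, []) : Δ.Config)]).get i = v[i.1] := by
        simp only [List.get_eq_getElem]
        exact List.getElem_append_left hiv
      rw [hget]
      have hmem : v[i.1] ∈ v.tail := by
        have h' : i.1 - 1 < v.tail.length := by
          rw [List.length_tail]; omega
        refine List.mem_iff_getElem.mpr ⟨i.1 - 1, h', ?_⟩
        rw [List.getElem_tail]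
        congr 1
        omega
      have hne2 : v[i.1].2 ≠ ([] : List _) := hv.2 _ hmem
      simp only [PVPACore.sh]
      exact List.length_pos_iff.mpr hne2⟩⟩
  left_inv x := by
    obtain ⟨t, w, hw⟩ := x
    obtain ⟨hlen, hhead, hlast, hmid⟩ := hw
    have hwne : w ≠ [] := by intro h; rw [h] at hlen; simp at hlen
    have hlast' : w.getLast hwne = ((t, []) : Δ.Config) := by
      rwa [List.getLast?_eq_getLast hwne, Option.some_inj] at hlast
    have : w.dropLast ++ [((t, []) : Δ.Config)] = w := by
      conv_rhs => rw [← List.dropLast_append_getLast hwne]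
      rw [hlast']
    exact Sigma.ext rfl (heq_of_eq (Subtype.ext this))
  right_inv p := by
    obtain ⟨⟨v, hv⟩, t⟩ := p
    refine Prod.ext (Subtype.ext ?_) rfl
    exact List.dropLast_concat

lemma tsum_retProb_eq_inner (q : Q) (Z : {Z : Γ // Z ≠ Δ.bot}) :
    ∑' t : Q, Δ.retProb q Z t =
      ∑' v : {v : List Δ.Config // IsInner Δ q Z v},
        Δ.pathWeight v.1 *
          ∑' t : Q, Δ.cfgP (v.1.getLast (IsInner.ne_nil Δ v.2)) ((t, []) : Δ.Config) := by
  unfold PVPACore.retProb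
  rw [← ENNReal.tsum_sigma' (fun x : (Σ t : Q, {w : List Δ.Config // Δ.IsRetPath q Z t w}) =>
    Δ.pathWeight x.2.1)]
  rw [← Equiv.tsum_eq (retEquiv Δ q Z).symm
    (fun x : (Σ t : Q, {w : List Δ.Config // Δ.IsRetPath q Z t w}) => Δ.pathWeight x.2.1)]
  have hfun : ∀ p : ({v : List Δ.Config // IsInner Δ q Z v} × Q),
      Δ.pathWeight (((retEquiv Δ q Z).symm p).2 : List Δ.Config) =
        Δ.pathWeight (p.1.1 ++ [((p.2, []) : Δ.Config)]) := fun p => rfl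
  rw [tsum_congr hfun, ENNReal.tsum_prod']
  refine tsum_congr fun v => ?_
  rw [← ENNReal.tsum_mul_left]
  refine tsum_congr fun t => ?_
  rw [pathWeight_concat Δ v.1 (IsInner.ne_nil Δ v.2)]

lemma tsum_retProb_eq_of_symbol (q : Q) (Z Z' : {Z : Γ // Z ≠ Δ.bot}) :
    ∑' t : Q, Δ.retProb q Z t = ∑' t : Q, Δ.retProb q Z' t := by
  classical
  set σ : {Z : Γ // Z ≠ Δ.bot} → {Z : Γ // Z ≠ Δ.bot} := ⇑(Equiv.swap Z Z') with hσdef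
  have hσ : Involutive σ := fun x => Equiv.swap_apply_self Z Z' x
  have hZ : σ Z = Z' := Equiv.swap_apply_left Z Z'
  have hZ' : σ Z' = Z := Equiv.swap_apply_right Z Z'
  have hFinv : ∀ c : Δ.Config, F Δ σ (F Δ σ c) = c := by
    intro c
    simp only [F]
    exact Prod.ext rfl (modLast_involutive hσ c.2)
  have hmapinv : ∀ v : List Δ.Config, (v.map (F Δ σ)).map (F Δ σ) = v := by
    intro v
    rw [List.map_map]
    simpa [Function.comp_def] using List.map_congr_left (fun c _ => hFinv c) |>.trans (List.map_id v)
  let e : {v : List Δ.Config // IsInner Δ q Z v} ≃ {v : List Δ.Config // IsInner Δ q Z' v} :=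
    { toFun := fun v => ⟨v.1.map (F Δ σ), isInner_map Δ hZ v.2⟩
      invFun := fun v => ⟨v.1.map (F Δ σ), isInner_map Δ hZ' v.2⟩
      left_inv := fun v => Subtype.ext (hmapinv v.1)
      right_inv := fun v => Subtype.ext (hmapinv v.1) }
  rw [tsum_retProb_eq_inner Δ q Z, tsum_retProb_eq_inner Δ q Z', ← Equiv.tsum_eq e]
  refine tsum_congr fun v => ?_
  obtain ⟨v, hv⟩ := v
  have hvne : v ≠ [] := IsInner.ne_nil Δ hv
  have hall : ∀ c ∈ v, c.2 ≠ ([] : List _) := IsInner.all_ne_nil Δ hv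
  have h1 : Δ.pathWeight (v.map (F Δ σ)) = Δ.pathWeight v := pathWeight_map Δ hσ v hall
  have hne' : v.map (F Δ σ) ≠ [] := by simp [hvne]
  have h2 : (v.map (F Δ σ)).getLast hne' = F Δ σ (v.getLast hvne) := by
    rw [List.getLast_map]
  have h3 : ∑' t : Q, Δ.cfgP ((v.map (F Δ σ)).getLast hne') ((t, []) : Δ.Config) =
      ∑' t : Q, Δ.cfgP (v.getLast hvne) ((t, []) : Δ.Config) := by
    rw [h2]
    exact tsum_cfgP_pop Δ (v.getLast hvne) (hall _ (List.getLast_mem hvne))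
  show Δ.pathWeight v * (∑' t : Q, Δ.cfgP (v.getLast hvne) ((t, []) : Δ.Config)) =
    Δ.pathWeight (v.map (F Δ σ)) *
      ∑' t : Q, Δ.cfgP ((v.map (F Δ σ)).getLast hne') ((t, []) : Δ.Config)
  rw [h1, h3]

end PVPAProof

/-- the diverge probability is independent of the stack symbol:
for every `q ∈ Q` and all non-bottom stack symbols `Z, Z'`,
`Σ_{t∈Q} [qZ↓t] = Σ_{t∈Q} [qZ'↓t]`; hence `⟨q↑⟩ = 1 − Σ_t [qZ↓t]` is well defined
independently of `Z`. -/
theorem diverge_prob_indep_stack_symbol {Q Γ A : Type} [Fintype Q] [DecidableEq Q]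
    [Fintype Γ] [DecidableEq Γ] [Fintype A] (ty : A → SymType)
    (Δ : PVPACore Q Γ) (lab : Q → A) (hlab : ∀ q, ty (lab q) = Δ.stType q)
    (q : Q) (Z Z' : {Z : Γ // Z ≠ Δ.bot}) :
    (∑' t : Q, Δ.retProb q Z t) = ∑' t : Q, Δ.retProb q Z' t ∧
      Δ.divergeProb q Z = Δ.divergeProb q Z' := by
  have h := PVPAProof.tsum_retProb_eq_of_symbol Δ q Z Z'
  exact ⟨h, by unfold PVPACore.divergeProb; rw [h]⟩
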